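/- (Ahlfors lemma) Let f : ℂ → X be an entire curve in a compact hermitian complex manifold X. For r > 0 let a(r) be the area of f restricted to the disc D_r of radius r and l(r) the length of f restricted to the circle ∂D_r. Then there exists a sequence r_n → +∞ such that l(r_n)/a(r_n) → 0; that is, the rescaled discs f_n : D → X, f_n(z) = f(r_n z), satisfy condition (A): length(f_n(∂D))/area(f_n(D)) → 0. -/

import Mathlib

/- Ahlfors lemma.

`X` is a compact complex manifold modeled on a finite-dimensional complex normed space
`E`, with hermitian area form `ω` (continuous, antisymmetric, `J`-invariant, with
`ω x v (i • v) = ‖v‖² > 0` for `v ≠ 0`).  For an entire curve `f : ℂ → X`,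
`cArea ω f r = ∫_{D_r} f*ω` is the area of `f` on the disc of radius `r` and
`cLen ω f r = ∫_{∂D_r} ‖f'‖ ds` the length of the image of the circle of radius `r`.
The conclusion produces radii `r n → ∞` with `l (r n) / a (r n) → 0`; equivalently, the
rescaled discs `z ↦ f (r n • z)` satisfy the Ahlfors condition (A). -/

open Metric Filter MeasureTheory
open scoped Manifold Topology

noncomputable section

variable {E : Type*} [NormedAddCommGroup E] [NormedSpace ℂ E] [FiniteDimensional ℂ E]
variable {X : Type*} [TopologicalSpace X] [T2Space X] [ChartedSpace E X]

/-- Density of the pullback by `f : ℂ → X` of the 2-form `α` on `X`. -/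
def pdFull (α : X → E →L[ℝ] E →L[ℝ] ℝ) (f : ℂ → X) (z : ℂ) : ℝ :=
  α (f z) (mfderiv 𝓘(ℂ) 𝓘(ℂ, E) f z (1 : ℂ)) (mfderiv 𝓘(ℂ) 𝓘(ℂ, E) f z (Complex.I : ℂ))

/-- The area of the image by `f` of the disc of radius `r`. -/
def cArea (ω : X → E →L[ℝ] E →L[ℝ] ℝ) (f : ℂ → X) (r : ℝ) : ℝ :=
  ∫ z in ball (0 : ℂ) r, pdFull ω f z

/-- The image of the tangent vector to the circle of radius `r` at `r e^{iθ}` under the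
derivative of `f`. -/
def cvec (f : ℂ → X) (r θ : ℝ) : E :=
  mfderiv 𝓘(ℂ) 𝓘(ℂ, E) f ((r : ℂ) * Complex.exp ((θ : ℂ) * Complex.I))
    (Complex.I * ((r : ℂ) * Complex.exp ((θ : ℂ) * Complex.I)))

/-- The length of the image by `f` of the circle of radius `r`. -/
def cLen (ω : X → E →L[ℝ] E →L[ℝ] ℝ) (f : ℂ → X) (r : ℝ) : ℝ :=
  ∫ θ in (0 : ℝ)..(2 * Real.pi),
    Real.sqrt (ω (f ((r : ℂ) * Complex.exp ((θ : ℂ) * Complex.I)))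
      (cvec f r θ) (Complex.I • cvec f r θ))

namespace AhlforsAux

open Real Set

set_option linter.unusedSectionVars false

/-- Quadratic scaling of a hermitian form under complex scalar multiplication. -/
theorem omega_smul (ω : X → E →L[ℝ] E →L[ℝ] ℝ)
    (hω_anti : ∀ x v w, ω x v w = - ω x w v)
    (hω_J : ∀ (x : X) (v w : E), ω x (Complex.I • v) (Complex.I • w) = ω x v w)
    (x : X) (c : ℂ) (w : E) :
    ω x (c • w) (Complex.I • (c • w)) = ‖c‖ ^ 2 * ω x w (Complex.I • w) := by
  have hdec : c • w = c.re • w + c.im • (Complex.I • w) := by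
    rw [← Complex.coe_smul, ← Complex.coe_smul, smul_smul, ← add_smul, Complex.re_add_im]
  have hIc : Complex.I • (c • w) = c.re • (Complex.I • w) + c.im • ((-1 : ℝ) • w) := by
    rw [← Complex.coe_smul, ← Complex.coe_smul, ← Complex.coe_smul, smul_smul, smul_smul,
      smul_smul, ← add_smul]
    congr 1
    apply Complex.ext <;> push_cast <;> simp
  have hww : ω x w w = 0 := by have := hω_anti x w w; linarith
  have huu : ω x (Complex.I • w) (Complex.I • w) = 0 := by
    have := hω_anti x (Complex.I • w) (Complex.I • w); linarith
  have huw : ω x (Complex.I • w) w = - ω x w (Complex.I • w) := hω_anti x (Complex.I • w) w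
  have habs : ‖c‖ ^ 2 = c.re ^ 2 + c.im ^ 2 := by
    rw [Complex.sq_norm, Complex.normSq_apply]; ring
  rw [hIc, hdec]
  simp only [_root_.map_add, _root_.map_smul, _root_.map_neg, ContinuousLinearMap.add_apply, ContinuousLinearMap.coe_smul',
    Pi.smul_apply, smul_eq_mul, hww, huu, huw, habs,
    neg_one_smul, ContinuousLinearMap.neg_apply, smul_neg, neg_neg, mul_neg]
  ring

/-- The derivative of `f` applied to `I` is `I` times the derivative applied to `1`. -/
theorem mfderiv_I (f : ℂ → X) (z : ℂ) (c : ℂ) :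
    mfderiv 𝓘(ℂ) 𝓘(ℂ, E) f z c = c • mfderiv 𝓘(ℂ) 𝓘(ℂ, E) f z (1 : ℂ) := by
  have h : c = c • (1 : ℂ) := by simp
  conv_lhs => rw [h]
  exact (mfderiv 𝓘(ℂ) 𝓘(ℂ, E) f z).map_smul c (1 : ℂ)

theorem pdFull_eq (ω : X → E →L[ℝ] E →L[ℝ] ℝ) (f : ℂ → X) (z : ℂ) :
    pdFull ω f z = ω (f z) (mfderiv 𝓘(ℂ) 𝓘(ℂ, E) f z (1 : ℂ))
      (Complex.I • mfderiv 𝓘(ℂ) 𝓘(ℂ, E) f z (1 : ℂ)) := by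
  rw [pdFull, mfderiv_I f z Complex.I]

theorem pdFull_nonneg (ω : X → E →L[ℝ] E →L[ℝ] ℝ)
    (hω_pos : ∀ (x : X) (v : E), v ≠ 0 → 0 < ω x v (Complex.I • v))
    (f : ℂ → X) (z : ℂ) : 0 ≤ pdFull ω f z := by
  rw [pdFull_eq]
  rcases eq_or_ne (mfderiv 𝓘(ℂ) 𝓘(ℂ, E) f z (1 : ℂ)) 0 with h | h
  · have h' : (mfderiv 𝓘(ℂ) 𝓘(ℂ, E) f z (1 : ℂ) : E) = (0 : E) := h
    rw [h', (ω (f z)).map_zero]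
    exact le_of_eq (ContinuousLinearMap.zero_apply _).symm
  · exact (hω_pos _ _ h).le

theorem cLen_nonneg (ω : X → E →L[ℝ] E →L[ℝ] ℝ) (f : ℂ → X) (r : ℝ) :
    0 ≤ cLen ω f r := by
  refine intervalIntegral.integral_nonneg (by positivity) fun u _ => Real.sqrt_nonneg _

theorem cLen_eq (ω : X → E →L[ℝ] E →L[ℝ] ℝ)
    (hω_anti : ∀ x v w, ω x v w = - ω x w v)
    (hω_J : ∀ (x : X) (v w : E), ω x (Complex.I • v) (Complex.I • w) = ω x v w)
    (f : ℂ → X) {r : ℝ} (hr : 0 < r) :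
    cLen ω f r = ∫ θ in (0:ℝ)..(2 * Real.pi),
      r * Real.sqrt (pdFull ω f ((r : ℂ) * Complex.exp ((θ : ℂ) * Complex.I))) := by
  refine intervalIntegral.integral_congr fun θ _ => ?_
  set z : ℂ := (r : ℂ) * Complex.exp ((θ : ℂ) * Complex.I) with hz
  set vE : E := mfderiv 𝓘(ℂ) 𝓘(ℂ, E) f z (1 : ℂ) with hvE
  have hcv : cvec f r θ = (Complex.I * z) • vE := mfderiv_I f z _
  have habs : ‖Complex.I * z‖ = r := by
    rw [hz, norm_mul, norm_mul, Complex.norm_I, Complex.norm_real, Real.norm_eq_abs,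
      Complex.norm_exp_ofReal_mul_I, one_mul, mul_one, abs_of_pos hr]
  have h1 : ω (f z) (cvec f r θ) (Complex.I • cvec f r θ)
      = ‖Complex.I * z‖ ^ 2 * ω (f z) vE (Complex.I • vE) := by
    rw [hcv]; exact omega_smul ω hω_anti hω_J (f z) _ vE
  have h2 : pdFull ω f z = ω (f z) vE (Complex.I • vE) := pdFull_eq ω f z
  rw [h1, habs, h2, Real.sqrt_mul (sq_nonneg r), Real.sqrt_sq hr.le]

/-- Cauchy-Schwarz for the circle integral. -/
theorem integral_sqrt_le {h : ℝ → ℝ} (hpos : ∀ θ, 0 ≤ h θ)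
    (hint : IntegrableOn h (Ioc (0:ℝ) (2 * π))) :
    ∫ θ in (0:ℝ)..(2*π), Real.sqrt (h θ) ≤
      Real.sqrt (2*π) * Real.sqrt (∫ θ in (0:ℝ)..(2*π), h θ) := by
  have h2π : (0:ℝ) < 2*π := by positivity
  rw [intervalIntegral.integral_of_le h2π.le, intervalIntegral.integral_of_le h2π.le]
  set μ := volume.restrict (Ioc (0:ℝ) (2*π)) with hμ
  have hsm : AEStronglyMeasurable (fun θ => Real.sqrt (h θ)) μ :=
    Real.continuous_sqrt.comp_aestronglyMeasurable hint.1
  have hsqint : Integrable (fun θ => Real.sqrt (h θ)) μ := by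
    refine Integrable.mono' ((integrable_const (1:ℝ)).add hint) hsm ?_
    refine ae_of_all _ fun θ => ?_
    rw [Real.norm_eq_abs, abs_of_nonneg (Real.sqrt_nonneg _)]
    simp only [Pi.add_apply]
    nlinarith [Real.sq_sqrt (hpos θ), Real.sqrt_nonneg (h θ),
      sq_nonneg (Real.sqrt (h θ) - 1)]
  set I := ∫ θ, h θ ∂μ with hI
  have hI0 : 0 ≤ I := integral_nonneg fun θ => hpos θ
  rcases eq_or_lt_of_le hI0 with h0 | hIpos
  · have hae : h =ᵐ[μ] 0 :=
      (integral_eq_zero_iff_of_nonneg_ae (ae_of_all _ hpos) hint).mp h0.symm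
    have hae2 : (fun θ => Real.sqrt (h θ)) =ᵐ[μ] 0 := by
      filter_upwards [hae] with θ hθ
      simp only [Pi.zero_apply] at hθ ⊢
      simp [hθ]
    rw [integral_congr_ae hae2, ← h0]
    simp
  · set t := Real.sqrt I / Real.sqrt (2*π) with ht
    have hsπ : 0 < Real.sqrt (2*π) := Real.sqrt_pos.mpr h2π
    have hsI : 0 < Real.sqrt I := Real.sqrt_pos.mpr hIpos
    have ht0 : 0 < t := div_pos hsI hsπ
    have hptw : ∀ θ, Real.sqrt (h θ) ≤ h θ / (2*t) + t/2 := by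
      intro θ
      rw [div_add_div _ _ (by positivity) (by positivity), le_div_iff₀ (by positivity)]
      nlinarith [Real.sq_sqrt (hpos θ), Real.sqrt_nonneg (h θ),
        sq_nonneg (Real.sqrt (h θ) - t)]
    have hmono := integral_mono hsqint
      ((hint.div_const (2*t)).add (integrable_const (t/2))) hptw
    simp only [Pi.add_apply] at hmono
    rw [integral_add (hint.div_const (2*t)) (integrable_const (t/2)), integral_div,
      integral_const, ← hI, hμ, measureReal_def, Measure.restrict_apply_univ, Real.volume_Ioc,
      show (2*π - 0 : ℝ) = 2*π by ring, ENNReal.toReal_ofReal h2π.le, smul_eq_mul] at hmono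
    refine hmono.trans (le_of_eq ?_)
    have e1 : Real.sqrt (2*π) ^ 2 = 2*π := Real.sq_sqrt h2π.le
    have e2 : Real.sqrt I ^ 2 = I := Real.sq_sqrt hI0
    have hts : Real.sqrt I = t * Real.sqrt (2*π) := by rw [ht]; field_simp
    have hI2 : I = t^2 * (2*π) := by rw [← e2, hts, mul_pow, e1]
    rw [hts, hI2,
      show Real.sqrt (2*π) * (t * Real.sqrt (2*π)) = t * (Real.sqrt (2*π))^2 by ring, e1]
    field_simp
    ring

theorem complex_polarCoord_symm_eq (p : ℝ × ℝ) :
    Complex.polarCoord.symm p = (p.1 : ℂ) * Complex.exp ((p.2 : ℂ) * Complex.I) := by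
  rw [Complex.polarCoord_symm_apply, Complex.exp_mul_I]
  simp [← Complex.ofReal_cos, ← Complex.ofReal_sin]

theorem real_polar_eq (p : ℝ × ℝ) :
    ((polarCoord.symm p).1 : ℂ) + ((polarCoord.symm p).2 : ℝ) * Complex.I
      = (p.1 : ℂ) * Complex.exp ((p.2 : ℂ) * Complex.I) := by
  rw [polarCoord_symm_apply, Complex.exp_mul_I]
  push_cast [← Complex.ofReal_cos, ← Complex.ofReal_sin]
  ring

theorem abs_mul_exp (s θ : ℝ) (hs : 0 ≤ s) :
    ‖(s : ℂ) * Complex.exp ((θ : ℂ) * Complex.I)‖ = s := by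
  rw [norm_mul, Complex.norm_real, Real.norm_eq_abs, Complex.norm_exp_ofReal_mul_I, mul_one, abs_of_nonneg hs]

theorem mem_annulus_iff {s θ r₁ r₂ : ℝ} (hs : 0 ≤ s) :
    (s : ℂ) * Complex.exp ((θ : ℂ) * Complex.I) ∈ ball (0:ℂ) r₂ \ ball (0:ℂ) r₁ ↔
      s ∈ Ico r₁ r₂ := by
  simp only [mem_diff, mem_ball_zero_iff, abs_mul_exp s θ hs, mem_Ico,
    not_lt]
  tauto

/-- Transfer of integrability through polar coordinates. -/
theorem integrableOn_polar {F : ℂ → ℝ} {r₁ r₂ : ℝ} (h1 : 0 < r₁)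
    (hF : IntegrableOn F (ball (0:ℂ) r₂ \ ball (0:ℂ) r₁)) :
    IntegrableOn (fun p : ℝ × ℝ => p.1 * F ((p.1 : ℂ) * Complex.exp ((p.2 : ℂ) * Complex.I)))
      (Ico r₁ r₂ ×ˢ Ioo (-π) π) := by
  set S : Set (ℝ × ℝ) := Ico r₁ r₂ ×ˢ Ioo (-π) π with hSdef
  have hSm : MeasurableSet S := measurableSet_Ico.prod measurableSet_Ioo
  have hsub : S ⊆ polarCoord.target := by
    rintro ⟨s, θ⟩ ⟨hs, hθ⟩
    exact ⟨lt_of_lt_of_le h1 hs.1, hθ⟩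
  have hinj : Set.InjOn polarCoord.symm S :=
    polarCoord.symm.injOn.mono (by rw [OpenPartialHomeomorph.symm_source]; exact hsub)
  set B : ℝ × ℝ → ℝ × ℝ →L[ℝ] ℝ × ℝ := fun p =>
    LinearMap.toContinuousLinearMap (Matrix.toLin (Module.Basis.finTwoProd ℝ) (Module.Basis.finTwoProd ℝ)
      !![Real.cos p.2, -p.1 * Real.sin p.2; Real.sin p.2, p.1 * Real.cos p.2]) with hB
  have hder : ∀ p ∈ S, HasFDerivWithinAt polarCoord.symm (B p) S p := fun p _ =>
    (hasFDerivAt_polarCoord_symm p).hasFDerivWithinAt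
  have hBdet : ∀ p, (B p).det = p.1 := by
    intro p
    conv_rhs => rw [← one_mul p.1, ← Real.cos_sq_add_sin_sq p.2]
    simp only [hB, neg_mul, LinearMap.det_toContinuousLinearMap, LinearMap.det_toLin,
      Matrix.det_fin_two_of, sub_neg_eq_add]
    ring
  set F' : ℝ × ℝ → ℝ := fun q => F ((q.1 : ℂ) + (q.2 : ℝ) * Complex.I) with hF'
  have himg : IntegrableOn F' (polarCoord.symm '' S) := by
    have hFzz : IntegrableOn (F' ∘ ⇑Complex.measurableEquivRealProd)
        (ball (0:ℂ) r₂ \ ball (0:ℂ) r₁) := by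
      apply hF.congr_fun ?_ (measurableSet_ball.diff measurableSet_ball)
      intro z _
      show F z = F' (Complex.measurableEquivRealProd z)
      rw [hF', Complex.measurableEquivRealProd_apply]
      simp [Complex.re_add_im]
    have h2 : IntegrableOn F'
        (⇑Complex.measurableEquivRealProd '' (ball (0:ℂ) r₂ \ ball (0:ℂ) r₁)) :=
      (Complex.volume_preserving_equiv_real_prod.integrableOn_image
        Complex.measurableEquivRealProd.measurableEmbedding).mpr hFzz
    refine h2.mono_set ?_
    rintro q ⟨p, hp, rfl⟩
    refine ⟨(p.1 : ℂ) * Complex.exp ((p.2 : ℂ) * Complex.I),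
      (mem_annulus_iff (le_of_lt (lt_of_lt_of_le h1 hp.1.1))).mpr hp.1, ?_⟩
    rw [← real_polar_eq p, Complex.measurableEquivRealProd_apply]
    apply Prod.ext <;>
      simp [Complex.add_re, Complex.add_im, Complex.ofReal_re, Complex.ofReal_im,
        Complex.mul_re, Complex.mul_im, Complex.I_re, Complex.I_im, Complex.cos_ofReal_re,
        Complex.sin_ofReal_re]
  have key := (integrableOn_image_iff_integrableOn_abs_det_fderiv_smul volume hSm hder hinj
    F').mp himg
  refine key.congr_fun (fun p hp => ?_) hSm
  have hfp : F' (polarCoord.symm p) = F ((p.1 : ℂ) * Complex.exp ((p.2 : ℂ) * Complex.I)) := by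
    rw [hF']; exact congrArg F (real_polar_eq p)
  beta_reduce
  rw [hBdet, abs_of_pos (lt_of_lt_of_le h1 hp.1.1), smul_eq_mul, hfp]

/-- Polar coordinates formula for the integral over an annulus. -/
theorem integral_annulus {F : ℂ → ℝ} {r₁ r₂ : ℝ} (h1 : 0 < r₁)
    (hF : IntegrableOn F (ball (0:ℂ) r₂ \ ball (0:ℂ) r₁)) :
    (∫ z in ball (0:ℂ) r₂ \ ball (0:ℂ) r₁, F z) =
      ∫ s in Ico r₁ r₂, ∫ θ in Ioo (-π) π,
        s * F ((s : ℂ) * Complex.exp ((θ : ℂ) * Complex.I)) := by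
  have hAm : MeasurableSet (ball (0:ℂ) r₂ \ ball (0:ℂ) r₁) :=
    measurableSet_ball.diff measurableSet_ball
  have hpolar := Complex.integral_comp_polarCoord_symm
    ((ball (0:ℂ) r₂ \ ball (0:ℂ) r₁).indicator F)
  rw [integral_indicator hAm] at hpolar
  rw [← hpolar]
  have hSm : MeasurableSet (Ico r₁ r₂ ×ˢ Ioo (-π) π) :=
    measurableSet_Ico.prod measurableSet_Ioo
  have hsub : Ico r₁ r₂ ×ˢ Ioo (-π) π ⊆ polarCoord.target := by
    rintro ⟨s, θ⟩ ⟨hs, hθ⟩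
    exact ⟨lt_of_lt_of_le h1 hs.1, hθ⟩
  have hstep : Set.EqOn
      (fun p : ℝ × ℝ => p.1 • (ball (0:ℂ) r₂ \ ball (0:ℂ) r₁).indicator F
        (Complex.polarCoord.symm p))
      ((Ico r₁ r₂ ×ˢ Ioo (-π) π).indicator
        (fun q : ℝ × ℝ => q.1 * F ((q.1 : ℂ) * Complex.exp ((q.2 : ℂ) * Complex.I))))
      polarCoord.target := by
    rintro ⟨s, θ⟩ ⟨hs, hθ⟩
    simp only
    rw [complex_polarCoord_symm_eq]
    by_cases hmem : s ∈ Ico r₁ r₂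
    · rw [indicator_of_mem ((mem_annulus_iff (le_of_lt hs)).mpr hmem),
        indicator_of_mem (show ((s,θ) : ℝ × ℝ) ∈ Ico r₁ r₂ ×ˢ Ioo (-π) π from ⟨hmem, hθ⟩),
        smul_eq_mul]
    · rw [indicator_of_notMem (fun hc => hmem ((mem_annulus_iff (le_of_lt hs)).mp hc)),
        indicator_of_notMem (fun hc : ((s,θ) : ℝ × ℝ) ∈ _ => hmem hc.1), smul_zero]
  rw [setIntegral_congr_fun polarCoord.open_target.measurableSet hstep,
    setIntegral_indicator hSm, inter_eq_self_of_subset_right hsub]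
  have hg : IntegrableOn
      (fun p : ℝ × ℝ => p.1 * F ((p.1 : ℂ) * Complex.exp ((p.2 : ℂ) * Complex.I)))
      (Ico r₁ r₂ ×ˢ Ioo (-π) π) := integrableOn_polar h1 hF
  rw [MeasureTheory.Measure.volume_eq_prod] at hg ⊢
  exact setIntegral_prod _ hg

/-- The key length-area inequality on an annulus. -/
theorem key_ineq (ω : X → E →L[ℝ] E →L[ℝ] ℝ)
    (hω_anti : ∀ x v w, ω x v w = - ω x w v)
    (hω_J : ∀ (x : X) (v w : E), ω x (Complex.I • v) (Complex.I • w) = ω x v w)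
    (hω_pos : ∀ (x : X) (v : E), v ≠ 0 → 0 < ω x v (Complex.I • v))
    (f : ℂ → X) {r₁ r₂ K : ℝ} (h1 : 0 < r₁) (h12 : r₁ ≤ r₂) (hK0 : 0 ≤ K)
    (hInt : IntegrableOn (pdFull ω f) (ball (0:ℂ) r₂))
    (hlen : ∀ s, r₁ ≤ s → s < r₂ → K ≤ cLen ω f s) :
    cArea ω f r₁ + K^2/(2*π) * (Real.log r₂ - Real.log r₁) ≤ cArea ω f r₂ := by
  have hGnn : ∀ z, 0 ≤ pdFull ω f z := pdFull_nonneg ω hω_pos f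
  have hannulus : cArea ω f r₂ - cArea ω f r₁
      = ∫ z in ball (0:ℂ) r₂ \ ball (0:ℂ) r₁, pdFull ω f z := by
    simp only [cArea]
    exact (integral_diff measurableSet_ball hInt (ball_subset_ball h12)).symm
  have hFint : IntegrableOn (pdFull ω f) (ball (0:ℂ) r₂ \ ball (0:ℂ) r₁) :=
    hInt.mono_set diff_subset
  have hpol := integral_annulus h1 hFint
  have hg := integrableOn_polar h1 hFint
  rw [IntegrableOn, Measure.volume_eq_prod, ← Measure.prod_restrict] at hg
  have hae := hg.prod_right_ae
  have hLint := hg.integral_prod_left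
  -- almost-everywhere lower bound on the inner integral
  have hKb : ∀ᵐ (s : ℝ) ∂(volume.restrict (Ico r₁ r₂)),
      K^2/(2*π) * (1/s) ≤ ∫ θ in Ioo (-π) π,
        s * pdFull ω f ((s : ℂ) * Complex.exp ((θ : ℂ) * Complex.I)) := by
    filter_upwards [hae, self_mem_ae_restrict measurableSet_Ico] with s hsint hsmem
    have hs0 : 0 < s := lt_of_lt_of_le h1 hsmem.1
    set h : ℝ → ℝ := fun θ => pdFull ω f ((s : ℂ) * Complex.exp ((θ : ℂ) * Complex.I)) with hh
    have hGint : IntegrableOn h (Ioo (-π) π) := by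
      have h' := hsint.const_mul (1/s)
      refine h'.congr (ae_of_all _ fun θ => ?_)
      show 1/s * (s * h θ) = h θ
      field_simp
    have hper : Function.Periodic h (2*π) := by
      intro θ
      have harg : ((θ + 2*π : ℝ) : ℂ) * Complex.I
          = (θ:ℂ)*Complex.I + 2*π*Complex.I := by push_cast; ring
      simp only [hh, harg, Complex.exp_add, Complex.exp_two_pi_mul_I, mul_one]
    have hII : IntervalIntegrable h volume (-π) π :=
      (intervalIntegrable_iff_integrableOn_Ioo_of_le (by linarith [pi_pos])).mpr hGint
    have hII2 : IntervalIntegrable h volume 0 (2*π) := by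
      have h2 := hII.comp_sub_right (2*π)
      have heq : (fun θ => h (θ - 2*π)) = h := by
        funext θ
        have := hper (θ - 2*π)
        rw [sub_add_cancel] at this
        exact this.symm
      rw [heq, show -π + 2*π = π by ring, show π + 2*π = 3*π by ring] at h2
      refine (hII.trans h2).mono_set ?_
      rw [uIcc_of_le (by positivity), uIcc_of_le (by linarith [pi_pos])]
      exact Icc_subset_Icc (by linarith [pi_pos]) (by linarith [pi_pos])
    have hIoc : IntegrableOn h (Ioc 0 (2*π)) :=
      (intervalIntegrable_iff_integrableOn_Ioc_of_le (by positivity)).mp hII2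
    have hcs := integral_sqrt_le (fun θ => hGnn _) hIoc
    have hls : cLen ω f s = s * ∫ θ in (0:ℝ)..(2*π), Real.sqrt (h θ) := by
      rw [cLen_eq ω hω_anti hω_J f hs0, intervalIntegral.integral_const_mul]
    have hJ : ∫ θ in (0:ℝ)..(2*π), h θ = ∫ θ in Ioo (-π) π, h θ := by
      have hshift := hper.intervalIntegral_add_eq (-π) 0
      rw [show -π + 2*π = π by ring, zero_add] at hshift
      rw [← hshift, intervalIntegral.integral_of_le (by linarith [pi_pos]),
        integral_Ioc_eq_integral_Ioo]
    have hJ0 : 0 ≤ ∫ θ in Ioo (-π) π, h θ :=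
      setIntegral_nonneg measurableSet_Ioo fun θ _ => hGnn _
    have hKl : K ≤ s * (Real.sqrt (2*π) * Real.sqrt (∫ θ in Ioo (-π) π, h θ)) := by
      refine (hlen s hsmem.1 hsmem.2).trans ?_
      rw [hls, ← hJ]
      exact mul_le_mul_of_nonneg_left hcs hs0.le
    have hsq : K^2 ≤ s^2 * (2*π) * (∫ θ in Ioo (-π) π, h θ) := by
      have h2' := pow_le_pow_left₀ hK0 hKl 2
      have e1 : Real.sqrt (2*π) ^ 2 = 2*π := Real.sq_sqrt (by positivity)
      have e2 : Real.sqrt (∫ θ in Ioo (-π) π, h θ) ^ 2 = ∫ θ in Ioo (-π) π, h θ :=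
        Real.sq_sqrt hJ0
      calc K^2 ≤ (s * (Real.sqrt (2*π) * Real.sqrt (∫ θ in Ioo (-π) π, h θ)))^2 := h2'
        _ = s^2 * Real.sqrt (2*π)^2 * Real.sqrt (∫ θ in Ioo (-π) π, h θ)^2 := by ring
        _ = s^2 * (2*π) * (∫ θ in Ioo (-π) π, h θ) := by rw [e1, e2]
    have hΛ : ∫ θ in Ioo (-π) π, s * h θ = s * ∫ θ in Ioo (-π) π, h θ :=
      integral_const_mul s _
    rw [show (∫ θ in Ioo (-π) π,
        s * pdFull ω f ((s : ℂ) * Complex.exp ((θ : ℂ) * Complex.I)))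
      = ∫ θ in Ioo (-π) π, s * h θ from rfl, hΛ,
      show K^2/(2*π) * (1/s) = K^2 / (2*π*s) by ring,
      div_le_iff₀ (by positivity)]
    exact hsq.trans (le_of_eq (by ring))
  have hrhsint : Integrable (fun s : ℝ => K^2/(2*π) * (1/s)) (volume.restrict (Ico r₁ r₂)) := by
    have hcont : ContinuousOn (fun s : ℝ => K^2/(2*π) * (1/s)) (Icc r₁ r₂) := by
      apply ContinuousOn.mul continuousOn_const
      exact continuousOn_const.div continuousOn_id fun x hx =>
        ne_of_gt (lt_of_lt_of_le h1 hx.1)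
    exact (hcont.integrableOn_Icc).mono_set Ico_subset_Icc_self
  have hL2 : Integrable (fun s : ℝ => ∫ θ in Ioo (-π) π,
      s * pdFull ω f ((s : ℂ) * Complex.exp ((θ : ℂ) * Complex.I)))
      (volume.restrict (Ico r₁ r₂)) := hLint
  have hmono2 := integral_mono_ae hrhsint hL2 hKb
  have hlog : ∫ s in Ico r₁ r₂, K^2/(2*π) * (1/s)
      = K^2/(2*π) * (Real.log r₂ - Real.log r₁) := by
    have h0mem : (0:ℝ) ∉ Set.uIcc r₁ r₂ := by
      rw [uIcc_of_le h12]
      exact fun hc => absurd hc.1 (not_le.mpr h1)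
    rw [integral_const_mul, integral_Ico_eq_integral_Ioo, ← integral_Ioc_eq_integral_Ioo,
      ← intervalIntegral.integral_of_le h12, integral_one_div h0mem,
      Real.log_div (by linarith : (0:ℝ) < r₂).ne' h1.ne']
  have hfinal : K^2/(2*π) * (Real.log r₂ - Real.log r₁)
      ≤ cArea ω f r₂ - cArea ω f r₁ := by
    rw [hannulus, hpol]
    exact hlog ▸ hmono2
  linarith

end AhlforsAux

/-- **Ahlfors lemma.** For every entire curve `f : ℂ → X` in a compact hermitian complex
manifold there are radii `r n → +∞` along which the ratio length/area of the restricted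
discs tends to `0` (condition (A)). -/
theorem ahlfors_lemma
    [IsManifold 𝓘(ℂ, E) (⊤ : ℕ∞) X] [CompactSpace X]
    -- the hermitian area form on `X`
    (ω : X → E →L[ℝ] E →L[ℝ] ℝ) (hω_cont : Continuous ω)
    (hω_anti : ∀ x v w, ω x v w = - ω x w v)
    (hω_J : ∀ (x : X) (v w : E), ω x (Complex.I • v) (Complex.I • w) = ω x v w)
    (hω_pos : ∀ (x : X) (v : E), v ≠ 0 → 0 < ω x v (Complex.I • v))
    -- an entire curve
    (f : ℂ → X) (hf : MDifferentiable 𝓘(ℂ) 𝓘(ℂ, E) f) (hnc : ∃ z w : ℂ, f z ≠ f w) :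
    ∃ r : ℕ → ℝ, (∀ n, 0 < r n) ∧ Tendsto r atTop atTop ∧
      Tendsto (fun n => cLen ω f (r n) / cArea ω f (r n)) atTop (𝓝 0) := by
  classical
  have hGnn : ∀ z, 0 ≤ pdFull ω f z := AhlforsAux.pdFull_nonneg ω hω_pos f
  have hlnn : ∀ r, 0 ≤ cLen ω f r := AhlforsAux.cLen_nonneg ω f
  by_cases hcase : ∀ N : ℝ, ∃ r, N ≤ r ∧ cArea ω f r = 0
  · -- degenerate case: the area vanishes along arbitrarily large radii
    have H : ∀ n : ℕ, ∃ r, ((n:ℝ)+1) ≤ r ∧ cArea ω f r = 0 := fun n => hcase _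
    choose r hr1 hr2 using H
    refine ⟨r, fun n => lt_of_lt_of_le (by positivity) (hr1 n), ?_, ?_⟩
    · exact tendsto_atTop_mono hr1
        (tendsto_atTop_add_const_right _ 1 tendsto_natCast_atTop_atTop)
    · have hz : (fun n => cLen ω f (r n) / cArea ω f (r n)) = fun _ => (0:ℝ) := by
        funext n; rw [hr2 n, div_zero]
      rw [hz]
      exact tendsto_const_nhds
  · push_neg at hcase
    obtain ⟨R₀', hR₀'⟩ := hcase
    set R₀ : ℝ := max R₀' 1 with hR₀def
    have hR₀pos : (0:ℝ) < R₀ := lt_of_lt_of_le one_pos (le_max_right _ _)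
    have hAne : ∀ r, R₀ ≤ r → cArea ω f r ≠ 0 := fun r hr =>
      hR₀' r ((le_max_left _ _).trans hr)
    have hInt : ∀ r, R₀ ≤ r → IntegrableOn (pdFull ω f) (ball (0:ℂ) r) := by
      intro r hr
      by_contra hni
      exact hAne r hr (integral_undef hni)
    have hAnn : ∀ r, 0 ≤ cArea ω f r := fun r =>
      setIntegral_nonneg measurableSet_ball fun z _ => hGnn z
    have hApos : ∀ r, R₀ ≤ r → 0 < cArea ω f r := fun r hr =>
      lt_of_le_of_ne (hAnn r) (Ne.symm (hAne r hr))
    have hAmono : ∀ r₁ r₂, r₁ ≤ r₂ → R₀ ≤ r₂ → cArea ω f r₁ ≤ cArea ω f r₂ := by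
      intro r₁ r₂ h12 hr₂
      exact setIntegral_mono_set (hInt r₂ hr₂) (Filter.Eventually.of_forall fun z => hGnn z)
        (HasSubset.Subset.eventuallyLE (ball_subset_ball h12))
    have H : ∀ n : ℕ, ∃ r, max ((n:ℝ)+1) R₀ ≤ r ∧
        cLen ω f r < (1/((n:ℝ)+1)) * cArea ω f r := by
      by_contra hH
      push_neg at hH
      obtain ⟨n, hn⟩ := hH
      set ε : ℝ := 1/((n:ℝ)+1) with hε
      have hε0 : 0 < ε := by positivity
      set R₁ : ℝ := max ((n:ℝ)+1) R₀ with hR₁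
      have hR₁R₀ : R₀ ≤ R₁ := le_max_right _ _
      have hR₁pos : 0 < R₁ := lt_of_lt_of_le hR₀pos hR₁R₀
      set c : ℝ := ε^2/(2*Real.pi) with hc
      have hc0 : 0 < c := by positivity
      set A₀ : ℝ := cArea ω f R₁ with hA₀
      have hA₀pos : 0 < A₀ := hApos R₁ hR₁R₀
      have key : ∀ r₁ r₂, R₁ ≤ r₁ → r₁ ≤ r₂ →
          cArea ω f r₁ + c * (cArea ω f r₁)^2 * (Real.log r₂ - Real.log r₁)
            ≤ cArea ω f r₂ := by
        intro r₁ r₂ hr₁ h12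
        have h1 : 0 < r₁ := lt_of_lt_of_le hR₁pos hr₁
        have hlb : ∀ s, r₁ ≤ s → s < r₂ → ε * cArea ω f r₁ ≤ cLen ω f s := by
          intro s hs hs2
          calc ε * cArea ω f r₁ ≤ ε * cArea ω f s :=
                mul_le_mul_of_nonneg_left
                  (hAmono r₁ s hs (hR₁R₀.trans (hr₁.trans hs))) hε0.le
            _ ≤ cLen ω f s := hn s (hr₁.trans hs)
        have hkey := AhlforsAux.key_ineq ω hω_anti hω_J hω_pos f h1 h12
          (mul_nonneg hε0.le (hAnn r₁))
          (hInt r₂ (hR₁R₀.trans (hr₁.trans h12))) hlb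
        have harr : (ε * cArea ω f r₁)^2/(2*Real.pi) = c * (cArea ω f r₁)^2 := by
          rw [hc]; ring
        rw [harr] at hkey
        linarith
      set ρ : ℕ → ℝ := fun k =>
        Nat.rec R₁ (fun _ r => r * Real.exp (1/(c * cArea ω f r))) k with hρ
      have hρ0 : ρ 0 = R₁ := rfl
      have hρs : ∀ k, ρ (k+1) = ρ k * Real.exp (1/(c * cArea ω f (ρ k))) := fun k => rfl
      have hge : ∀ k, R₁ ≤ ρ k := by
        intro k
        induction k with
        | zero => exact le_of_eq hρ0.symm
        | succ k ih =>
          rw [hρs k]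
          have hek : 1 ≤ Real.exp (1/(c * cArea ω f (ρ k))) := by
            have := Real.add_one_le_exp (1/(c * cArea ω f (ρ k)))
            have hApk : 0 < cArea ω f (ρ k) := hApos _ (hR₁R₀.trans ih)
            have : 0 ≤ 1/(c * cArea ω f (ρ k)) := by positivity
            linarith [Real.add_one_le_exp (1/(c * cArea ω f (ρ k)))]
          calc R₁ ≤ ρ k := ih
            _ ≤ ρ k * Real.exp (1/(c * cArea ω f (ρ k))) :=
                le_mul_of_one_le_right (le_trans hR₁pos.le ih) hek
      have hA2 : ∀ k, A₀ * 2^k ≤ cArea ω f (ρ k) := by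
        intro k
        induction k with
        | zero => simp [hρ0, hA₀]
        | succ k ih =>
          have h1 : R₁ ≤ ρ k := hge k
          have hρk0 : 0 < ρ k := lt_of_lt_of_le hR₁pos h1
          have hApk : 0 < cArea ω f (ρ k) := hApos _ (hR₁R₀.trans h1)
          have hek : 1 ≤ Real.exp (1/(c * cArea ω f (ρ k))) := by
            have : 0 ≤ 1/(c * cArea ω f (ρ k)) := by positivity
            linarith [Real.add_one_le_exp (1/(c * cArea ω f (ρ k)))]
          have h12 : ρ k ≤ ρ (k+1) := by
            rw [hρs k]
            exact le_mul_of_one_le_right hρk0.le hek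
          have hkey := key (ρ k) (ρ (k+1)) h1 h12
          have hlog : Real.log (ρ (k+1)) - Real.log (ρ k)
              = 1/(c * cArea ω f (ρ k)) := by
            rw [hρs k, Real.log_mul hρk0.ne' (Real.exp_pos _).ne', Real.log_exp]
            ring
          rw [hlog] at hkey
          have hcml : c * (cArea ω f (ρ k))^2 * (1/(c * cArea ω f (ρ k)))
              = cArea ω f (ρ k) := by
            field_simp
          rw [hcml] at hkey
          calc A₀ * 2^(k+1) = 2 * (A₀ * 2^k) := by ring
            _ ≤ 2 * cArea ω f (ρ k) := by linarith
            _ ≤ cArea ω f (ρ (k+1)) := by linarith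
      have hub : ∀ k, ρ k ≤ R₁ * Real.exp ((2 - 2*(1/2)^k)/(c*A₀)) := by
        intro k
        induction k with
        | zero =>
          rw [hρ0, pow_zero]
          rw [show (2 - 2*(1:ℝ))/(c*A₀) = 0 by ring, Real.exp_zero, mul_one]
        | succ k ih =>
          rw [hρs k]
          have hApk : 0 < cArea ω f (ρ k) := hApos _ (hR₁R₀.trans (hge k))
          have hbound : 1/(c * cArea ω f (ρ k)) ≤ (1/2)^k/(c*A₀) := by
            have h1' : 1/(c * cArea ω f (ρ k)) ≤ 1/(c * (A₀ * 2^k)) :=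
              one_div_le_one_div_of_le (by positivity)
                (mul_le_mul_of_nonneg_left (hA2 k) hc0.le)
            refine h1'.trans (le_of_eq ?_)
            have h2k : ((1:ℝ)/2)^k * (2:ℝ)^k = 1 := by
              rw [← mul_pow]; norm_num
            rw [div_eq_div_iff (by positivity) (by positivity)]
            linear_combination (-(c*A₀)) * h2k
          calc ρ k * Real.exp (1/(c * cArea ω f (ρ k)))
              ≤ (R₁ * Real.exp ((2 - 2*(1/2)^k)/(c*A₀))) * Real.exp ((1/2)^k/(c*A₀)) :=
                mul_le_mul ih (Real.exp_le_exp.mpr hbound) (Real.exp_pos _).le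
                  (by positivity)
            _ = R₁ * Real.exp ((2 - 2*(1/2)^(k+1))/(c*A₀)) := by
                rw [mul_assoc, ← Real.exp_add, ← add_div]
                congr 2
                ring
      set Rstar : ℝ := R₁ * Real.exp (2/(c*A₀)) with hRs
      have hubs : ∀ k, ρ k ≤ Rstar := by
        intro k
        refine (hub k).trans ?_
        rw [hRs]
        refine mul_le_mul_of_nonneg_left (Real.exp_le_exp.mpr ?_) hR₁pos.le
        rw [div_le_div_iff₀ (by positivity) (by positivity)]
        have h2p : (0:ℝ) < (1/2)^k := by positivity
        nlinarith [mul_pos (mul_pos hc0 hA₀pos) h2p]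
      have hRstarR₀ : R₀ ≤ Rstar := by
        have he1 : 1 ≤ Real.exp (2/(c*A₀)) := by
          have : 0 ≤ 2/(c*A₀) := by positivity
          linarith [Real.add_one_le_exp (2/(c*A₀))]
        calc R₀ ≤ R₁ := hR₁R₀
          _ ≤ R₁ * Real.exp (2/(c*A₀)) := le_mul_of_one_le_right hR₁pos.le he1
      have hcontr : ∀ k, A₀ * 2^k ≤ cArea ω f Rstar := fun k =>
        (hA2 k).trans (hAmono (ρ k) Rstar (hubs k) hRstarR₀)
      obtain ⟨k, hk⟩ := pow_unbounded_of_one_lt (cArea ω f Rstar / A₀) one_lt_two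
      rw [div_lt_iff₀ hA₀pos] at hk
      linarith [hcontr k]
    choose r hr1 hr2 using H
    have hrg : ∀ n : ℕ, ((n:ℝ)+1) ≤ r n := fun n => (le_max_left _ _).trans (hr1 n)
    have hrR₀ : ∀ n, R₀ ≤ r n := fun n => (le_max_right _ _).trans (hr1 n)
    refine ⟨r, fun n => lt_of_lt_of_le (by positivity) (hrg n), ?_, ?_⟩
    · exact tendsto_atTop_mono hrg
        (tendsto_atTop_add_const_right _ 1 tendsto_natCast_atTop_atTop)
    · have h0 : ∀ n, 0 ≤ cLen ω f (r n) / cArea ω f (r n) := fun n =>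
        div_nonneg (hlnn _) (hAnn _)
      have hup : ∀ n : ℕ, cLen ω f (r n) / cArea ω f (r n) ≤ 1/((n:ℝ)+1) := by
        intro n
        rw [div_le_iff₀ (hApos _ (hrR₀ n))]
        calc cLen ω f (r n) ≤ (1/((n:ℝ)+1)) * cArea ω f (r n) := (hr2 n).le
          _ = 1/((n:ℝ)+1) * cArea ω f (r n) := rfl
      exact tendsto_of_tendsto_of_tendsto_of_le_of_le tendsto_const_nhds
        tendsto_one_div_add_atTop_nhds_zero_nat h0 hup
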